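/- Let T > 0, ε > 0, E ≥ 1 and C > 0, and let x : [0, T] → ℝ^d be a measurable curve such that for every r ≥ 0 the Lebesgue measure of {t ∈ [0, T] : |x(t)| ≤ r} is at most C·r/√E. Then ∫₀^T √E · ⟨x(t)⟩^{−(1+ε)} dt ≤ C·(1+ε)/ε, where ⟨y⟩ = (1+|y|²)^{1/2}. -/

import Mathlib

open MeasureTheory

noncomputable section

/-- The Japanese bracket `⟨x⟩ = (1 + |x|²)^{1/2}`. -/
def jap {E : Type*} [NormedAddCommGroup E] (x : E) : ℝ := Real.sqrt (1 + ‖x‖ ^ 2)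

/-- Classical analogue of the Kato smoothing effect: if a measurable curve `x(t)` spends at
most `C r/√E` time in every ball of radius `r`, then
`∫₀^T √E ⟨x(t)⟩^{-(1+ε)} dt ≤ C(1+ε)/ε`. -/
theorem stmt_10 (d : ℕ) (T ε E C : ℝ) (hT : 0 < T) (hε : 0 < ε) (hE : 1 ≤ E) (hC : 0 < C)
    (x : ℝ → EuclideanSpace ℝ (Fin d)) (hx : Measurable x)
    (h : ∀ r : ℝ, 0 ≤ r →
      volume {t : ℝ | t ∈ Set.Icc 0 T ∧ ‖x t‖ ≤ r} ≤ ENNReal.ofReal (C * r / Real.sqrt E)) :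
    ∫ t in (0 : ℝ)..T, Real.sqrt E * jap (x t) ^ (-(1 + ε)) ≤ C * (1 + ε) / ε := by
  have hε1 : (0:ℝ) < 1 + ε := by linarith
  set s := Real.sqrt E with hsdef
  have hs1 : 1 ≤ s := by
    rw [hsdef, show (1:ℝ) = Real.sqrt 1 from Real.sqrt_one.symm]
    exact Real.sqrt_le_sqrt hE
  have hs0 : (0:ℝ) < s := lt_of_lt_of_le one_pos hs1
  set p : ℝ := 1 / (1 + ε) with hpdef
  have hp0 : 0 < p := by positivity
  have hp1 : p < 1 := by rw [hpdef, div_lt_one hε1]; linarith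
  have hmul : (1 + ε) * p = 1 := by rw [hpdef, mul_one_div, div_self hε1.ne']
  set f : ℝ → ℝ := fun t => s * jap (x t) ^ (-(1 + ε)) with hf
  have hjap1 : ∀ t, 1 ≤ jap (x t) := by
    intro t
    rw [show (1:ℝ) = Real.sqrt 1 from Real.sqrt_one.symm]
    exact Real.sqrt_le_sqrt (by nlinarith [sq_nonneg ‖x t‖])
  have hjap0 : ∀ t, 0 < jap (x t) := fun t => lt_of_lt_of_le one_pos (hjap1 t)
  have hnorm : ∀ t, ‖x t‖ ≤ jap (x t) := by
    intro t
    calc ‖x t‖ = Real.sqrt (‖x t‖ ^ 2) := (Real.sqrt_sq (norm_nonneg _)).symm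
      _ ≤ jap (x t) := Real.sqrt_le_sqrt (by nlinarith [sq_nonneg ‖x t‖])
  have hjm : Measurable fun t => jap (x t) := by
    have : Continuous fun y : ℝ => Real.sqrt (1 + y ^ 2) := by continuity
    exact this.measurable.comp hx.norm
  have hfm : Measurable f := by rw [hf]; fun_prop
  have hfnn : ∀ t, 0 ≤ f t := by
    intro t
    have := (hjap0 t).le
    positivity
  have hfle : ∀ t, f t ≤ s := by
    intro t
    have h1 : jap (x t) ^ (-(1 + ε)) ≤ 1 :=
      Real.rpow_le_one_of_one_le_of_nonpos (hjap1 t) (by linarith)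
    calc f t = s * jap (x t) ^ (-(1 + ε)) := rfl
      _ ≤ s * 1 := by
          apply mul_le_mul_of_nonneg_left h1 hs0.le
      _ = s := mul_one s
  set μ := volume.restrict (Set.Ioc (0:ℝ) T) with hμ
  -- reduce to a Lebesgue integral
  rw [intervalIntegral.integral_of_le hT.le]
  have key : ∫ t in Set.Ioc (0:ℝ) T, f t = (∫⁻ t, ENNReal.ofReal (f t) ∂μ).toReal :=
    integral_eq_lintegral_of_nonneg_ae (Filter.Eventually.of_forall hfnn)
      hfm.aestronglyMeasurable
  rw [show (∫ t in Set.Ioc (0:ℝ) T, Real.sqrt E * jap (x t) ^ (-(1 + ε))) =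
      ∫ t in Set.Ioc (0:ℝ) T, f t from rfl, key]
  -- layer cake
  have lc : ∫⁻ t, ENNReal.ofReal (f t) ∂μ = ∫⁻ lam in Set.Ioi (0:ℝ), μ {a | lam < f a} :=
    lintegral_eq_lintegral_meas_lt μ (Filter.Eventually.of_forall hfnn) hfm.aemeasurable
  -- the dominating function
  set g : ℝ → ENNReal := fun lam =>
    Set.indicator (Set.Ioc 0 s) (fun lam => ENNReal.ofReal (C / s * (s ^ p * lam ^ (-p)))) lam
    with hg
  have gmeas : Measurable g := by
    apply Measurable.indicator _ measurableSet_Ioc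
    exact ENNReal.measurable_ofReal.comp (by fun_prop)
  -- pointwise bound
  have hbound : ∀ lam ∈ Set.Ioi (0:ℝ), μ {a | lam < f a} ≤ g lam := by
    intro lam hlam
    simp only [Set.mem_Ioi] at hlam
    by_cases hls : lam ≤ s
    · -- nontrivial region
      have hr0 : (0:ℝ) ≤ (s / lam) ^ p := Real.rpow_nonneg (by positivity) p
      have hsub : {a | lam < f a} ∩ Set.Ioc 0 T ⊆
          {t : ℝ | t ∈ Set.Icc 0 T ∧ ‖x t‖ ≤ (s / lam) ^ p} := by
        rintro a ⟨ha, haT⟩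
        refine ⟨Set.Ioc_subset_Icc_self haT, ?_⟩
        have hja := hjap0 a
        have h1 : lam < s * (jap (x a) ^ (1 + ε))⁻¹ := by
          have ha' : lam < s * jap (x a) ^ (-(1 + ε)) := ha
          rwa [Real.rpow_neg hja.le] at ha'
        have hpow0 : 0 < jap (x a) ^ (1 + ε) := Real.rpow_pos_of_pos hja _
        have h2 : jap (x a) ^ (1 + ε) < s / lam := by
          rw [lt_div_iff₀ hlam]
          have := mul_lt_mul_of_pos_right h1 hpow0
          calc jap (x a) ^ (1 + ε) * lam = lam * jap (x a) ^ (1 + ε) := by ring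
            _ < s * (jap (x a) ^ (1 + ε))⁻¹ * jap (x a) ^ (1 + ε) := this
            _ = s := by field_simp
        have h3 : jap (x a) < (s / lam) ^ p := by
          have := Real.rpow_lt_rpow hpow0.le h2 hp0
          rwa [← Real.rpow_mul hja.le, hmul, Real.rpow_one] at this
        exact le_trans (hnorm a) h3.le
      have hmem : lam ∈ Set.Ioc 0 s := ⟨hlam, hls⟩
      have hgl : g lam = ENNReal.ofReal (C / s * (s ^ p * lam ^ (-p))) := by
        rw [hg]; exact Set.indicator_of_mem hmem _
      rw [hgl, hμ, Measure.restrict_apply' measurableSet_Ioc]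
      refine le_trans (le_trans (measure_mono hsub) (h _ hr0)) ?_
      apply ENNReal.ofReal_le_ofReal
      have : (s / lam) ^ p = s ^ p * lam ^ (-p) := by
        rw [Real.div_rpow hs0.le hlam.le, Real.rpow_neg hlam.le, div_eq_mul_inv]
      rw [this]; ring_nf; exact le_refl _
    · -- lam > s : empty set
      push_neg at hls
      have : {a | lam < f a} = ∅ := by
        ext a
        simp only [Set.mem_setOf_eq, Set.mem_empty_iff_false, iff_false, not_lt]
        exact le_trans (hfle a) hls.le
      rw [this]
      simp
  have step1 : ∫⁻ lam in Set.Ioi (0:ℝ), μ {a | lam < f a} ≤ ∫⁻ lam in Set.Ioi (0:ℝ), g lam :=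
    setLIntegral_mono gmeas hbound
  -- compute the integral of g
  have hioc : Set.Ioc (0:ℝ) s ∩ Set.Ioi (0:ℝ) = Set.Ioc 0 s := by
    apply Set.inter_eq_self_of_subset_left
    exact fun y hy => hy.1
  have step2 : ∫⁻ lam in Set.Ioi (0:ℝ), g lam
      = ∫⁻ lam in Set.Ioc (0:ℝ) s, ENNReal.ofReal (C / s * (s ^ p * lam ^ (-p))) := by
    rw [hg, lintegral_indicator measurableSet_Ioc, Measure.restrict_restrict measurableSet_Ioc,
      hioc]
  have hintg : IntegrableOn (fun lam : ℝ => C / s * (s ^ p * lam ^ (-p))) (Set.Ioc 0 s) := by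
    have hbase : IntervalIntegrable (fun lam : ℝ => lam ^ (-p)) volume 0 s :=
      intervalIntegral.intervalIntegrable_rpow' (by linarith)
    have := (hbase.const_mul (C / s * s ^ p)).1
    apply this.congr_fun ?_ measurableSet_Ioc
    intro lam _
    ring
  have step3 : ∫⁻ lam in Set.Ioc (0:ℝ) s, ENNReal.ofReal (C / s * (s ^ p * lam ^ (-p)))
      = ENNReal.ofReal (∫ lam in Set.Ioc (0:ℝ) s, C / s * (s ^ p * lam ^ (-p))) := by
    rw [← ofReal_integral_eq_lintegral_ofReal hintg]
    apply (ae_restrict_iff' measurableSet_Ioc).2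
    apply Filter.Eventually.of_forall
    intro lam hlam
    have h0 : (0:ℝ) < lam := hlam.1
    positivity
  have hval : ∫ lam in Set.Ioc (0:ℝ) s, C / s * (s ^ p * lam ^ (-p)) = C * (1 + ε) / ε := by
    have e1 : ∫ lam in Set.Ioc (0:ℝ) s, C / s * (s ^ p * lam ^ (-p))
        = (C / s * s ^ p) * ∫ lam in Set.Ioc (0:ℝ) s, lam ^ (-p) := by
      rw [← integral_const_mul]
      apply setIntegral_congr_fun measurableSet_Ioc
      intro lam _
      ring
    have e2 : ∫ lam in Set.Ioc (0:ℝ) s, (lam:ℝ) ^ (-p) = s ^ (1 - p) / (1 - p) := by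
      rw [← intervalIntegral.integral_of_le hs0.le,
        integral_rpow (Or.inl (by linarith : (-1:ℝ) < -p)),
        Real.zero_rpow (by linarith : -p + 1 ≠ 0)]
      norm_num
      rw [neg_add_eq_sub]
    rw [e1, e2]
    have e3 : s ^ p * s ^ (1 - p) = s := by
      rw [← Real.rpow_add hs0]
      norm_num
    have e4 : 1 - p = ε / (1 + ε) := by rw [hpdef]; field_simp; ring
    calc C / s * s ^ p * (s ^ (1 - p) / (1 - p))
        = C / s * (s ^ p * s ^ (1 - p)) / (1 - p) := by ring
      _ = C / s * s / (1 - p) := by rw [e3]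
      _ = C / (1 - p) := by field_simp
      _ = C * (1 + ε) / ε := by
          rw [e4, div_div_eq_mul_div, mul_div_assoc]
  -- conclude
  have final : ∫⁻ t, ENNReal.ofReal (f t) ∂μ ≤ ENNReal.ofReal (C * (1 + ε) / ε) := by
    rw [lc]
    exact le_trans step1 (le_of_eq (by rw [step2, step3, hval]))
  calc (∫⁻ t, ENNReal.ofReal (f t) ∂μ).toReal
      ≤ (ENNReal.ofReal (C * (1 + ε) / ε)).toReal :=
        ENNReal.toReal_mono ENNReal.ofReal_ne_top final
    _ = C * (1 + ε) / ε := ENNReal.toReal_ofReal (by positivity)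

end
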